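/- Let f: ℝ^d → [0,1]^K be a randomized function (outputting class score expectations) satisfying: for all k and all α with ‖α‖_p ≤ 1, E f_k(x) ≤ e^{ε} E f_k(x+α) + δ and E f_k(x+α) ≤ e^{ε} E f_k(x) + δ. If for some label k, E f_k(x) > e^{2ε} max_{i≠k} E f_i(x) + (1+e^{ε})δ, then for all α with ‖α‖_p ≤ 1 and all i ≠ k, E f_k(x+α) > E f_i(x+α). -/
import Mathlib


theorem stmt_12 (d K : ℕ) (p : ENNReal) (hp : 1 ≤ p)
    (F : PiLp p (fun _ : Fin d => ℝ) → Fin K → ℝ)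
    (hF : ∀ x k, F x k ∈ Set.Icc (0 : ℝ) 1)
    (ε δ : ℝ) (hε : ε > 0) (hδ : δ ≥ 0)
    (x : PiLp p (fun _ : Fin d => ℝ))
    (hDP : ∀ (k : Fin K) (α : PiLp p (fun _ : Fin d => ℝ)), ‖α‖ ≤ 1 →
      F x k ≤ Real.exp ε * F (x + α) k + δ ∧ F (x + α) k ≤ Real.exp ε * F x k + δ)
    (k : Fin K)
    (hrob : ∀ i, i ≠ k → F x k > Real.exp (2 * ε) * F x i + (1 + Real.exp ε) * δ) :
    ∀ (α : PiLp p (fun _ : Fin d => ℝ)), ‖α‖ ≤ 1 →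
      ∀ i, i ≠ k → F (x + α) k > F (x + α) i := by
  intro α hα i hik
  obtain ⟨h1, _⟩ := hDP k α hα
  obtain ⟨_, h2⟩ := hDP i α hα
  have hr := hrob i hik
  have he : Real.exp ε > 0 := Real.exp_pos ε
  have h2e : Real.exp (2 * ε) = Real.exp ε * Real.exp ε := by
    rw [two_mul, Real.exp_add]
  rw [h2e] at hr
  nlinarith [mul_le_mul_of_nonneg_left h2 he.le]
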